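/- Define the real 3×3 matrices A = [[4,−1,−1],[−1,4,0],[−1,0,4]], B = [[1/2,0,0],[1/2,0,0],[−1/2,0,0]], C₀ = [[3/2,−1,−1],[−1,5/4,1/4],[−1,1/4,5/4]], R₀ = [[1/2,3/4,1/4],[1/2,1/4,3/4],[0,0,0]]. Let a > 0, K > 0, and for each α ∈ (0,a) let C(α) and R(α) be real 3×3 matrices with C(α) symmetric, such that every entry of α·C(α) − C₀ and of R(α) − R₀ has absolute value at most K·α. Define S̃(α) = [[A, B],[Bᵀ, C(α)]], E(α) = [[I, −R(α)],[0, I]], and S(α) = E(α) S̃(α) E(α)ᵀ. Then there exists α₀ ∈ (0,a] such that for all α ∈ (0,α₀) the matrix S(α) is invertible and S(α)^{-1} is entrywise positive. -/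

import Mathlib

open Matrix

/-- The block `A` of the stiffness matrix. -/
noncomputable def Amat : Matrix (Fin 3) (Fin 3) ℝ :=
  !![4, -1, -1; -1, 4, 0; -1, 0, 4]

/-- The block `B` of the stiffness matrix. -/
noncomputable def Bmat : Matrix (Fin 3) (Fin 3) ℝ :=
  !![1/2, 0, 0; 1/2, 0, 0; -1/2, 0, 0]

/-- The leading term `C₀` of `α·C(α)`. -/
noncomputable def C0mat : Matrix (Fin 3) (Fin 3) ℝ :=
  !![3/2, -1, -1; -1, 5/4, 1/4; -1, 1/4, 5/4]

/-- The limit `R₀` of the change-of-basis block `R(α)`. -/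
noncomputable def R0mat : Matrix (Fin 3) (Fin 3) ℝ :=
  !![1/2, 3/4, 1/4; 1/2, 1/4, 3/4; 0, 0, 0]

/-- The stiffness matrix in the hierarchical basis. -/
noncomputable def Stilde (C : ℝ → Matrix (Fin 3) (Fin 3) ℝ) (t : ℝ) :
    Matrix (Fin 3 ⊕ Fin 3) (Fin 3 ⊕ Fin 3) ℝ :=
  Matrix.fromBlocks Amat Bmat Bmatᵀ (C t)

/-- The change-of-basis matrix. -/
noncomputable def Emat (R : ℝ → Matrix (Fin 3) (Fin 3) ℝ) (t : ℝ) :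
    Matrix (Fin 3 ⊕ Fin 3) (Fin 3 ⊕ Fin 3) ℝ :=
  Matrix.fromBlocks 1 (-(R t)) 0 1

/-- The stiffness matrix in the nodal basis. -/
noncomputable def Smat (C R : ℝ → Matrix (Fin 3) (Fin 3) ℝ) (t : ℝ) :
    Matrix (Fin 3 ⊕ Fin 3) (Fin 3 ⊕ Fin 3) ℝ :=
  Emat R t * Stilde C t * (Emat R t)ᵀ

noncomputable def Ainv : Matrix (Fin 3) (Fin 3) ℝ :=
  !![2/7, 1/14, 1/14; 1/14, 15/56, 1/56; 1/14, 1/56, 15/56]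
noncomputable def C0inv : Matrix (Fin 3) (Fin 3) ℝ :=
  !![6, 4, 4; 4, 7/2, 5/2; 4, 5/2, 7/2]


lemma hAAinv : Amat * Ainv = 1 := by
  ext i j
  fin_cases i <;> fin_cases j <;>
    simp [Amat, Ainv, Matrix.mul_apply, Fin.sum_univ_three, Matrix.one_apply, Matrix.vecHead, Matrix.vecTail] <;> norm_num

lemma hCCinv : C0mat * C0inv = 1 := by
  ext i j
  fin_cases i <;> fin_cases j <;>
    simp [C0mat, C0inv, Matrix.mul_apply, Fin.sum_univ_three, Matrix.one_apply, Matrix.vecHead, Matrix.vecTail] <;> norm_num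

lemma detA : Amat.det = 56 := by
  simp [Amat, Matrix.det_fin_three, Matrix.vecHead, Matrix.vecTail]; norm_num

lemma detC0 : C0mat.det = 1/4 := by
  simp [C0mat, Matrix.det_fin_three, Matrix.vecHead, Matrix.vecTail]; norm_num


noncomputable def Mfun (s : ℝ) (D : Matrix (Fin 3) (Fin 3) ℝ) :
    Matrix (Fin 3 ⊕ Fin 3) (Fin 3 ⊕ Fin 3) ℝ :=
  Matrix.fromBlocks Amat (s • Bmat) Bmatᵀ (C0mat + D)

noncomputable def gfun (s : ℝ) (D ρ : Matrix (Fin 3) (Fin 3) ℝ) :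
    Matrix (Fin 3 ⊕ Fin 3) (Fin 3 ⊕ Fin 3) ℝ :=
  Matrix.fromBlocks 1 0 (R0mat + ρ)ᵀ 1 *
    (Matrix.fromBlocks 1 0 0 (s • (1 : Matrix (Fin 3) (Fin 3) ℝ)) *
      (((Mfun s D).det)⁻¹ • (Mfun s D).adjugate *
        Matrix.fromBlocks 1 (R0mat + ρ) 0 1))

lemma Mfun_zero : Mfun 0 0 = Matrix.fromBlocks Amat 0 Bmatᵀ C0mat := by
  simp [Mfun]

lemma det_Mfun_zero : (Mfun 0 0).det ≠ 0 := by
  rw [Mfun_zero, Matrix.det_fromBlocks_zero₁₂, detA, detC0]; norm_num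

lemma Mfun_zero_inv :
    (Mfun 0 0)⁻¹ =
      Matrix.fromBlocks Ainv 0 (-(C0inv * (Bmatᵀ * Ainv))) C0inv := by
  apply Matrix.inv_eq_right_inv
  rw [Mfun_zero, Matrix.fromBlocks_multiply]
  rw [hAAinv]
  simp only [Matrix.mul_zero, Matrix.zero_mul, Matrix.mul_one, Matrix.one_mul, add_zero, zero_add,
    Matrix.mul_neg, hCCinv, ← Matrix.mul_assoc]
  simp [Matrix.fromBlocks_one]

lemma inv_smul_adj_zero :
    ((Mfun 0 0).det)⁻¹ • (Mfun 0 0).adjugate =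
      Matrix.fromBlocks Ainv 0 (-(C0inv * (Bmatᵀ * Ainv))) C0inv := by
  rw [← Mfun_zero_inv, Matrix.inv_def, Ring.inverse_eq_inv']

lemma gfun_zero :
    gfun 0 0 0 =
      Matrix.fromBlocks Ainv (Ainv * R0mat) (R0matᵀ * Ainv) (R0matᵀ * (Ainv * R0mat)) := by
  rw [gfun, inv_smul_adj_zero]
  simp only [add_zero, zero_smul, Matrix.fromBlocks_multiply, Matrix.mul_zero, Matrix.zero_mul,
    Matrix.mul_one, Matrix.one_mul, zero_add, Matrix.mul_assoc]

lemma hAR : Ainv * R0mat = !![5/28,13/56,1/8; 19/112,27/224,7/32; 5/112,13/224,1/32] := by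
  ext i j
  fin_cases i <;> fin_cases j <;>
    simp [Ainv, R0mat, Matrix.mul_apply, Fin.sum_univ_three, Matrix.vecHead, Matrix.vecTail] <;>
    norm_num

lemma hRA : R0matᵀ * Ainv = !![5/28,19/112,5/112; 13/56,27/224,13/224; 1/8,7/32,1/32] := by
  ext i j
  fin_cases i <;> fin_cases j <;>
    simp [Ainv, R0mat, Matrix.mul_apply, Fin.sum_univ_three, Matrix.vecHead, Matrix.vecTail] <;>
    norm_num

lemma hRAR : R0matᵀ * (Ainv * R0mat) =
    !![39/224,79/448,11/64; 79/448,183/896,19/128; 11/64,19/128,25/128] := by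
  rw [hAR]
  ext i j
  fin_cases i <;> fin_cases j <;>
    simp [R0mat, Matrix.mul_apply, Fin.sum_univ_three, Matrix.vecHead, Matrix.vecTail] <;>
    norm_num

lemma gfun_zero_pos : ∀ i j, 0 < gfun 0 0 0 i j := by
  rw [gfun_zero, hRAR, hAR, hRA]
  rintro (i | i) (j | j) <;> fin_cases i <;> fin_cases j <;>
    norm_num [Ainv, Matrix.vecHead, Matrix.vecTail]

noncomputable def Dmat (t : ℝ) : Matrix (Fin 3 ⊕ Fin 3) (Fin 3 ⊕ Fin 3) ℝ :=
  Matrix.fromBlocks 1 0 0 (t • (1 : Matrix (Fin 3) (Fin 3) ℝ))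

lemma det_Dmat (t : ℝ) : (Dmat t).det = t ^ 3 := by
  rw [Dmat, Matrix.det_fromBlocks_zero₂₁, Matrix.det_one, one_mul, Matrix.det_smul,
    Matrix.det_one]
  simp

lemma isUnit_det_Dmat {t : ℝ} (ht : t ≠ 0) : IsUnit (Dmat t).det := by
  rw [det_Dmat]
  exact isUnit_iff_ne_zero.2 (pow_ne_zero _ ht)

lemma Stilde_mul_D (C : ℝ → Matrix (Fin 3) (Fin 3) ℝ) (t : ℝ) :
    Stilde C t * Dmat t = Mfun t (t • C t - C0mat) := by
  rw [Stilde, Dmat, Mfun, Matrix.fromBlocks_multiply]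
  have h : C0mat + (t • C t - C0mat) = t • C t := by abel
  rw [h]
  simp [Matrix.mul_smul]

lemma Smat_eq (C R : ℝ → Matrix (Fin 3) (Fin 3) ℝ) (t : ℝ) (ht : t ≠ 0) :
    Smat C R t = Emat R t * Mfun t (t • C t - C0mat) * (Dmat t)⁻¹ * (Emat R t)ᵀ := by
  have h1 : Stilde C t = Mfun t (t • C t - C0mat) * (Dmat t)⁻¹ := by
    rw [← Stilde_mul_D, Matrix.mul_nonsing_inv_cancel_right _ _ (isUnit_det_Dmat ht)]
  rw [Smat, h1, ← Matrix.mul_assoc]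

lemma det_Emat (R : ℝ → Matrix (Fin 3) (Fin 3) ℝ) (t : ℝ) : (Emat R t).det = 1 := by
  rw [Emat, Matrix.det_fromBlocks_zero₂₁]
  simp

lemma Emat_inv (R : ℝ → Matrix (Fin 3) (Fin 3) ℝ) (t : ℝ) :
    (Emat R t)⁻¹ = Matrix.fromBlocks 1 (R t) 0 1 := by
  apply Matrix.inv_eq_right_inv
  rw [Emat, Matrix.fromBlocks_multiply]
  simp [Matrix.fromBlocks_one]

lemma EmatT_inv (R : ℝ → Matrix (Fin 3) (Fin 3) ℝ) (t : ℝ) :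
    ((Emat R t)ᵀ)⁻¹ = Matrix.fromBlocks 1 0 (R t)ᵀ 1 := by
  rw [← Matrix.transpose_nonsing_inv, Emat_inv, Matrix.fromBlocks_transpose]
  simp

lemma Smat_inv_eq (C R : ℝ → Matrix (Fin 3) (Fin 3) ℝ) (t : ℝ) (ht : t ≠ 0)
    (hdet : (Mfun t (t • C t - C0mat)).det ≠ 0) :
    IsUnit (Smat C R t) ∧
      (Smat C R t)⁻¹ = gfun t (t • C t - C0mat) (R t - R0mat) := by
  have hD := isUnit_det_Dmat ht
  have hS := Smat_eq C R t ht
  constructor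
  · rw [Matrix.isUnit_iff_isUnit_det, hS]
    simp only [Matrix.det_mul, det_Emat, Matrix.det_transpose, Matrix.det_nonsing_inv,
      Ring.inverse_eq_inv', det_Dmat, one_mul, mul_one]
    exact isUnit_iff_ne_zero.2 (mul_ne_zero hdet (inv_ne_zero (pow_ne_zero _ ht)))
  · have hR : R0mat + (R t - R0mat) = R t := by abel
    rw [hS, Matrix.mul_inv_rev, Matrix.mul_inv_rev, Matrix.mul_inv_rev,
      Matrix.nonsing_inv_nonsing_inv _ hD, EmatT_inv, Emat_inv, gfun, hR,
      Matrix.inv_def, Ring.inverse_eq_inv', Dmat]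

lemma cont_M : Continuous fun p : ℝ × Matrix (Fin 3) (Fin 3) ℝ × Matrix (Fin 3) (Fin 3) ℝ =>
    Mfun p.1 p.2.1 := by
  apply Continuous.matrix_fromBlocks
  · exact continuous_const
  · exact continuous_fst.smul continuous_const
  · exact continuous_const
  · exact continuous_const.add continuous_snd.fst

lemma cont_gfun :
    ContinuousAt (fun p : ℝ × Matrix (Fin 3) (Fin 3) ℝ × Matrix (Fin 3) (Fin 3) ℝ =>
      gfun p.1 p.2.1 p.2.2) (0, 0, 0) := by
  simp only [gfun]
  have hd : ContinuousAt
      (fun p : ℝ × Matrix (Fin 3) (Fin 3) ℝ × Matrix (Fin 3) (Fin 3) ℝ =>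
        (Mfun p.1 p.2.1).det) (0, 0, 0) := cont_M.matrix_det.continuousAt
  have hd0 : (fun p : ℝ × Matrix (Fin 3) (Fin 3) ℝ × Matrix (Fin 3) (Fin 3) ℝ =>
      (Mfun p.1 p.2.1).det) (0, 0, 0) ≠ 0 := by
    dsimp only
    exact det_Mfun_zero
  have hinv : ContinuousAt
      (fun p : ℝ × Matrix (Fin 3) (Fin 3) ℝ × Matrix (Fin 3) (Fin 3) ℝ =>
        ((Mfun p.1 p.2.1).det)⁻¹ • (Mfun p.1 p.2.1).adjugate) (0, 0, 0) :=
    (hd.inv₀ hd0).smul cont_M.matrix_adjugate.continuousAt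
  have cL : Continuous fun p : ℝ × Matrix (Fin 3) (Fin 3) ℝ × Matrix (Fin 3) (Fin 3) ℝ =>
      (Matrix.fromBlocks 1 0 (R0mat + p.2.2)ᵀ 1 :
        Matrix (Fin 3 ⊕ Fin 3) (Fin 3 ⊕ Fin 3) ℝ) :=
    Continuous.matrix_fromBlocks continuous_const continuous_const
      (continuous_const.add continuous_snd.snd).matrix_transpose continuous_const
  have cD : Continuous fun p : ℝ × Matrix (Fin 3) (Fin 3) ℝ × Matrix (Fin 3) (Fin 3) ℝ =>
      (Matrix.fromBlocks 1 0 0 (p.1 • (1 : Matrix (Fin 3) (Fin 3) ℝ)) :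
        Matrix (Fin 3 ⊕ Fin 3) (Fin 3 ⊕ Fin 3) ℝ) :=
    Continuous.matrix_fromBlocks continuous_const continuous_const continuous_const
      (continuous_fst.smul continuous_const)
  have cU : Continuous fun p : ℝ × Matrix (Fin 3) (Fin 3) ℝ × Matrix (Fin 3) (Fin 3) ℝ =>
      (Matrix.fromBlocks 1 (R0mat + p.2.2) 0 1 :
        Matrix (Fin 3 ⊕ Fin 3) (Fin 3 ⊕ Fin 3) ℝ) :=
    Continuous.matrix_fromBlocks continuous_const (continuous_const.add continuous_snd.snd)
      continuous_const continuous_const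
  exact cL.continuousAt.mul (cD.continuousAt.mul (hinv.mul cU.continuousAt))

/-- For all sufficiently small angles `α`, the stiffness matrix `S(α)` of the
patch containing a nearly degenerate triangulation is invertible with
entrywise positive inverse. -/
theorem inverse_stiffness_entrywise_pos
    (a K : ℝ) (ha : 0 < a) (hK : 0 < K)
    (C R : ℝ → Matrix (Fin 3) (Fin 3) ℝ)
    (hCsymm : ∀ t, 0 < t → t < a → (C t).IsSymm)
    (hCapprox : ∀ t, 0 < t → t < a → ∀ i j, |t * C t i j - C0mat i j| ≤ K * t)
    (hRapprox : ∀ t, 0 < t → t < a → ∀ i j, |R t i j - R0mat i j| ≤ K * t) :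
    ∃ α₀, 0 < α₀ ∧ α₀ ≤ a ∧
      ∀ t, 0 < t → t < α₀ →
        IsUnit (Smat C R t) ∧ ∀ i j, 0 < (Smat C R t)⁻¹ i j := by
  set l := nhdsWithin (0 : ℝ) (Set.Ioi 0) with hl
  have hmem : Set.Ioo (0 : ℝ) a ∈ l := Ioo_mem_nhdsGT_of_mem ⟨le_refl 0, ha⟩
  have hIoo : ∀ᶠ t in l, t ∈ Set.Ioo (0 : ℝ) a := hmem
  have ht1 : Filter.Tendsto (fun t : ℝ => t) l (nhds 0) :=
    Filter.tendsto_id.mono_right nhdsWithin_le_nhds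
  have hKt : Filter.Tendsto (fun t : ℝ => K * t) l (nhds 0) := by
    have := ht1.const_mul K
    simpa using this
  have hmat : ∀ F : ℝ → Matrix (Fin 3) (Fin 3) ℝ,
      (∀ᶠ t in l, ∀ i j, |F t i j| ≤ K * t) →
      Filter.Tendsto F l (nhds (0 : Matrix (Fin 3) (Fin 3) ℝ)) := by
    intro F hF
    refine tendsto_pi_nhds.2 ?_
    intro i
    rw [tendsto_pi_nhds]
    intro j
    have h0 : ((0 : Matrix (Fin 3) (Fin 3) ℝ) i j) = 0 := rfl
    rw [h0]
    apply squeeze_zero_norm' _ hKt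
    filter_upwards [hF] with t ht
    simpa [Real.norm_eq_abs] using ht i j
  have hΔ : Filter.Tendsto (fun t => t • C t - C0mat) l
      (nhds (0 : Matrix (Fin 3) (Fin 3) ℝ)) := by
    apply hmat
    filter_upwards [hIoo] with t ht i j
    simpa [Matrix.sub_apply, Matrix.smul_apply, smul_eq_mul] using hCapprox t ht.1 ht.2 i j
  have hρ : Filter.Tendsto (fun t => R t - R0mat) l
      (nhds (0 : Matrix (Fin 3) (Fin 3) ℝ)) := by
    apply hmat
    filter_upwards [hIoo] with t ht i j
    simpa [Matrix.sub_apply] using hRapprox t ht.1 ht.2 i j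
  have hφ : Filter.Tendsto (fun t => (t, t • C t - C0mat, R t - R0mat)) l
      (nhds ((0 : ℝ), (0 : Matrix (Fin 3) (Fin 3) ℝ), (0 : Matrix (Fin 3) (Fin 3) ℝ))) :=
    ht1.prodMk_nhds (hΔ.prodMk_nhds hρ)
  have h1 : ∀ᶠ p : ℝ × Matrix (Fin 3) (Fin 3) ℝ × Matrix (Fin 3) (Fin 3) ℝ in
      nhds (0, 0, 0), (Mfun p.1 p.2.1).det ≠ 0 := by
    have hd : ContinuousAt
        (fun p : ℝ × Matrix (Fin 3) (Fin 3) ℝ × Matrix (Fin 3) (Fin 3) ℝ =>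
          (Mfun p.1 p.2.1).det) (0, 0, 0) := cont_M.matrix_det.continuousAt
    have hd0 : (fun p : ℝ × Matrix (Fin 3) (Fin 3) ℝ × Matrix (Fin 3) (Fin 3) ℝ =>
        (Mfun p.1 p.2.1).det) (0, 0, 0) ≠ 0 := by
      dsimp only
      exact det_Mfun_zero
    exact hd.eventually (eventually_ne_nhds hd0)
  have h2 : ∀ᶠ p : ℝ × Matrix (Fin 3) (Fin 3) ℝ × Matrix (Fin 3) (Fin 3) ℝ in
      nhds (0, 0, 0), ∀ i j, 0 < gfun p.1 p.2.1 p.2.2 i j := by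
    rw [Filter.eventually_all]
    intro i
    rw [Filter.eventually_all]
    intro j
    have happ : Continuous fun M : Matrix (Fin 3 ⊕ Fin 3) (Fin 3 ⊕ Fin 3) ℝ => M i j :=
      (continuous_apply j).comp (continuous_apply i)
    have hc : ContinuousAt
        (fun p : ℝ × Matrix (Fin 3) (Fin 3) ℝ × Matrix (Fin 3) (Fin 3) ℝ =>
          gfun p.1 p.2.1 p.2.2 i j) (0, 0, 0) :=
      happ.continuousAt.comp cont_gfun
    have h0 : (0 : ℝ) < (fun p : ℝ × Matrix (Fin 3) (Fin 3) ℝ × Matrix (Fin 3) (Fin 3) ℝ =>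
        gfun p.1 p.2.1 p.2.2 i j) (0, 0, 0) := by
      dsimp only
      exact gfun_zero_pos i j
    exact hc.eventually (eventually_gt_nhds h0)
  have hev := hφ.eventually (h1.and h2)
  have H := hIoo.and hev
  rw [hl, Filter.eventually_iff] at H
  obtain ⟨ε, hε, hsub⟩ := Metric.mem_nhdsWithin_iff.1 H
  refine ⟨min ε a, lt_min hε ha, min_le_right _ _, ?_⟩
  intro t ht0 htlt
  have hball : t ∈ Metric.ball (0 : ℝ) ε ∩ Set.Ioi 0 := by
    constructor
    · rw [Metric.mem_ball, Real.dist_eq, sub_zero, abs_of_pos ht0]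
      exact lt_of_lt_of_le htlt (min_le_left _ _)
    · exact ht0
  obtain ⟨-, hdet, hpos⟩ := hsub hball
  dsimp only at hdet hpos
  obtain ⟨hu, hinv⟩ := Smat_inv_eq C R t (ne_of_gt ht0) hdet
  exact ⟨hu, by rw [hinv]; exact hpos⟩
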